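/- Let A_K = A + BK be an n_x-by-n_x matrix, K an n_u-by-n_x matrix, Q a positive semidefinite n_x-by-n_x matrix, R a positive definite n_u-by-n_u matrix, and P a symmetric matrix satisfying the Lyapunov equation A_K^T P A_K - P = -(Q + K^T R K). Let x be a square-integrable random vector in R^{n_x}, and let w be a square-integrable random vector in R^{n_x}, independent of x, with zero mean and covariance matrix Sigma^w. Then E( ||A_K x + w||_P^2 - ||x||_P^2 + ||x||_Q^2 + ||Kx||_R^2 ) = trace(P Sigma^w), where ||v||_M^2 denotes v^T M v. (This identity is the key step in the expected cost decrease of Theorem 3.) -/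

import Mathlib

open MeasureTheory ProbabilityTheory Matrix

private lemma mv_dp {n m : ℕ} (M : Matrix (Fin n) (Fin m) ℝ) (v : Fin m → ℝ) (u : Fin n → ℝ) :
    (M *ᵥ v) ⬝ᵥ u = v ⬝ᵥ (Mᵀ *ᵥ u) := by
  rw [dotProduct_comm, dotProduct_mulVec, dotProduct_comm, mulVec_transpose]

private lemma mulL2 {Ω : Type*} [MeasurableSpace Ω] (μ : Measure Ω) (f g : Ω → ℝ)
    (hf : MemLp f 2 μ) (hg : MemLp g 2 μ) : Integrable (fun ω => f ω * g ω) μ := by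
  have h : MemLp (f • g) 1 μ := hg.smul (r := 1) hf
  rw [memLp_one_iff_integrable] at h
  exact h

/-- **Expected cost decrease identity.**
If `P` is symmetric and solves the Lyapunov equation `A_Kᵀ P A_K - P = -(Q + Kᵀ R K)`, `x` is
a square-integrable random vector and `w` is a square-integrable zero-mean random vector with
covariance `Sigmaw`, independent of `x`, then
`E(‖A_K x + w‖_P² - ‖x‖_P² + ‖x‖_Q² + ‖K x‖_R²) = trace (P * Sigmaw)`. -/
theorem expected_cost_decrease_identity
    {nx nu : ℕ} {Ω : Type*} [MeasurableSpace Ω] (μ : Measure Ω) [IsProbabilityMeasure μ]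
    (A_K : Matrix (Fin nx) (Fin nx) ℝ) (K : Matrix (Fin nu) (Fin nx) ℝ)
    (Q P : Matrix (Fin nx) (Fin nx) ℝ) (R : Matrix (Fin nu) (Fin nu) ℝ)
    (hQ : Q.PosSemidef) (hR : R.PosDef) (hP : P.IsSymm)
    (hlyap : A_Kᵀ * P * A_K - P = -(Q + Kᵀ * R * K))
    (x w : Ω → Fin nx → ℝ)
    (hxmeas : Measurable x) (hwmeas : Measurable w)
    (hxL2 : ∀ i, MemLp (fun ω => x ω i) 2 μ)
    (hwL2 : ∀ i, MemLp (fun ω => w ω i) 2 μ)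
    (hindep : IndepFun x w μ)
    (hwmean : ∀ i, (∫ ω, w ω i ∂μ) = 0)
    (Sigmaw : Matrix (Fin nx) (Fin nx) ℝ)
    (hSigmaw : ∀ i j, Sigmaw i j = ∫ ω, w ω i * w ω j ∂μ) :
    (∫ ω, ((A_K *ᵥ x ω + w ω) ⬝ᵥ (P *ᵥ (A_K *ᵥ x ω + w ω))
        - x ω ⬝ᵥ (P *ᵥ x ω) + x ω ⬝ᵥ (Q *ᵥ x ω)
        + (K *ᵥ x ω) ⬝ᵥ (R *ᵥ (K *ᵥ x ω))) ∂μ) = (P * Sigmaw).trace := by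
  -- Lyapunov rearranged
  have h1 : A_Kᵀ * P * A_K = P - Q - Kᵀ * R * K := by
    have h := sub_eq_iff_eq_add.mp hlyap
    rw [h]; noncomm_ring
  -- pointwise identity
  have hpt : ∀ ω, ((A_K *ᵥ x ω + w ω) ⬝ᵥ (P *ᵥ (A_K *ᵥ x ω + w ω))
        - x ω ⬝ᵥ (P *ᵥ x ω) + x ω ⬝ᵥ (Q *ᵥ x ω)
        + (K *ᵥ x ω) ⬝ᵥ (R *ᵥ (K *ᵥ x ω)))
      = (A_K *ᵥ x ω) ⬝ᵥ (P *ᵥ w ω) + w ω ⬝ᵥ (P *ᵥ (A_K *ᵥ x ω)) + w ω ⬝ᵥ (P *ᵥ w ω) := by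
    intro ω
    set v := x ω with hv
    set u := w ω with hu
    have e1 : (A_K *ᵥ v) ⬝ᵥ (P *ᵥ (A_K *ᵥ v)) = v ⬝ᵥ ((A_Kᵀ * P * A_K) *ᵥ v) := by
      rw [mv_dp, mulVec_mulVec, mulVec_mulVec]
    have e2 : (K *ᵥ v) ⬝ᵥ (R *ᵥ (K *ᵥ v)) = v ⬝ᵥ ((Kᵀ * R * K) *ᵥ v) := by
      rw [mv_dp, mulVec_mulVec, mulVec_mulVec]
    simp only [mulVec_add, dotProduct_add, add_dotProduct, e1, e2, h1,
      sub_mulVec, dotProduct_sub]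
    ring
  rw [integral_congr_ae (Filter.Eventually.of_forall hpt)]
  -- L² facts
  have hAxL2 : ∀ i, MemLp (fun ω => (A_K *ᵥ x ω) i) 2 μ := by
    intro i
    have h := memLp_finset_sum' (μ := μ) Finset.univ
      (f := fun k (ω : Ω) => A_K i k * x ω k) (fun k _ => (hxL2 k).const_mul _)
    have he : (∑ k : Fin nx, fun (ω : Ω) => A_K i k * x ω k) = fun ω => (A_K *ᵥ x ω) i := by
      funext ω; simp [mulVec, dotProduct, Finset.sum_apply]
    rwa [he] at h
  have hint1 : ∀ i j, Integrable (fun ω => (A_K *ᵥ x ω) i * w ω j) μ :=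
    fun i j => mulL2 μ _ _ (hAxL2 i) (hwL2 j)
  have hint2 : ∀ i j, Integrable (fun ω => w ω i * (A_K *ᵥ x ω) j) μ :=
    fun i j => mulL2 μ _ _ (hwL2 i) (hAxL2 j)
  have hint3 : ∀ i j, Integrable (fun ω => w ω i * w ω j) μ :=
    fun i j => mulL2 μ _ _ (hwL2 i) (hwL2 j)
  -- independence of components
  have hindc : ∀ i j, IndepFun (fun ω => (A_K *ᵥ x ω) i) (fun ω => w ω j) μ := by
    intro i j
    exact hindep.comp (show Measurable fun v : Fin nx → ℝ => (A_K *ᵥ v) i from by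
        simp only [mulVec, dotProduct]
        exact Finset.measurable_sum _ fun k _ => (measurable_pi_apply k).const_mul _)
      (measurable_pi_apply j)
  -- cross expectations vanish
  have hcross1 : ∀ i j, (∫ ω, (A_K *ᵥ x ω) i * w ω j ∂μ) = 0 := by
    intro i j
    have h := (hindc i j).integral_mul_eq_mul_integral (hAxL2 i).aestronglyMeasurable
      (hwL2 j).aestronglyMeasurable
    rw [show (fun ω => (A_K *ᵥ x ω) i * w ω j) = ((fun ω => (A_K *ᵥ x ω) i) * fun ω => w ω j) from rfl]
    rw [h, hwmean j, mul_zero]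
  have hcross2 : ∀ i j, (∫ ω, w ω i * (A_K *ᵥ x ω) j ∂μ) = 0 := by
    intro i j
    have : (fun ω => w ω i * (A_K *ᵥ x ω) j) = fun ω => (A_K *ᵥ x ω) j * w ω i := by
      funext ω; ring
    rw [this, hcross1 j i]
  -- expand the three dot products as double sums
  have d : ∀ (M : Matrix (Fin nx) (Fin nx) ℝ) (u v : Fin nx → ℝ),
      u ⬝ᵥ (M *ᵥ v) = ∑ i, ∑ j, M i j * (u i * v j) := by
    intro M u v
    simp only [dotProduct, mulVec, Finset.mul_sum]
    exact Finset.sum_congr rfl fun i _ => Finset.sum_congr rfl fun j _ => by ring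
  have hexp : ∀ ω, (A_K *ᵥ x ω) ⬝ᵥ (P *ᵥ w ω) + w ω ⬝ᵥ (P *ᵥ (A_K *ᵥ x ω)) + w ω ⬝ᵥ (P *ᵥ w ω)
      = ∑ i, ∑ j, (P i j * ((A_K *ᵥ x ω) i * w ω j) + P i j * (w ω i * (A_K *ᵥ x ω) j)
          + P i j * (w ω i * w ω j)) := by
    intro ω
    rw [d, d, d]
    simp only [Finset.sum_add_distrib]
  rw [integral_congr_ae (Filter.Eventually.of_forall hexp)]
  have hintsum : ∀ i j, Integrable (fun ω => P i j * ((A_K *ᵥ x ω) i * w ω j)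
      + P i j * (w ω i * (A_K *ᵥ x ω) j) + P i j * (w ω i * w ω j)) μ :=
    fun i j => (((hint1 i j).const_mul _).add ((hint2 i j).const_mul _)).add
      ((hint3 i j).const_mul _)
  rw [integral_finset_sum _ (fun i _ => integrable_finset_sum _ (fun j _ => hintsum i j))]
  have hinner : ∀ i ∈ Finset.univ, (∫ ω, ∑ j, (P i j * ((A_K *ᵥ x ω) i * w ω j)
      + P i j * (w ω i * (A_K *ᵥ x ω) j) + P i j * (w ω i * w ω j)) ∂μ)
      = ∑ j, P i j * Sigmaw i j := by
    intro i _
    rw [integral_finset_sum _ (fun j _ => hintsum i j)]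
    refine Finset.sum_congr rfl fun j _ => ?_
    have hA := integral_add (μ := μ)
      (f := fun ω => P i j * ((A_K *ᵥ x ω) i * w ω j) + P i j * (w ω i * (A_K *ᵥ x ω) j))
      (g := fun ω => P i j * (w ω i * w ω j))
      (((hint1 i j).const_mul _).add ((hint2 i j).const_mul _)) ((hint3 i j).const_mul _)
    have hB := integral_add (μ := μ)
      (f := fun ω => P i j * ((A_K *ᵥ x ω) i * w ω j))
      (g := fun ω => P i j * (w ω i * (A_K *ᵥ x ω) j))
      ((hint1 i j).const_mul _) ((hint2 i j).const_mul _)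
    rw [hA, hB, integral_const_mul, integral_const_mul, integral_const_mul,
      hcross1 i j, hcross2 i j, hSigmaw i j]
    ring
  rw [Finset.sum_congr rfl hinner]
  -- conclude: trace
  have hSsymm : ∀ i j, Sigmaw i j = Sigmaw j i := by
    intro i j
    rw [hSigmaw, hSigmaw]
    exact integral_congr_ae (Filter.Eventually.of_forall fun ω => mul_comm _ _)
  simp only [trace, diag, mul_apply]
  exact Finset.sum_congr rfl fun i _ => Finset.sum_congr rfl fun j _ => by rw [hSsymm i j]
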